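/- For a nonincreasing, nonnegative, integrable function f on [0,1], if a real number P satisfies P ≤ ∫₀^θ f(z) dz + f(θ) for all θ ∈ (0,1], then (1 − 1/e)·P ≤ ∫₀¹ f(z) dz. -/

import Mathlib

open MeasureTheory

/-- Analytic core of the `(1 − 1/e)` water-filling analysis: if `f` is nonincreasing,
nonnegative and integrable on `[0,1]`, and `P ≤ ∫₀^θ f + f(θ)` for all `θ ∈ (0,1]`,
then `(1 − 1/e) · P ≤ ∫₀¹ f`. -/
theorem stmt_8 (f : ℝ → ℝ)
    (hmono : AntitoneOn f (Set.Icc 0 1))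
    (hpos : ∀ z ∈ Set.Icc (0 : ℝ) 1, 0 ≤ f z)
    (hint : IntervalIntegrable f volume 0 1)
    (P : ℝ)
    (hP : ∀ θ ∈ Set.Ioc (0 : ℝ) 1, P ≤ (∫ z in (0 : ℝ)..θ, f z) + f θ) :
    (1 - 1 / Real.exp 1) * P ≤ ∫ z in (0 : ℝ)..1, f z := by
  -- clamp f to get a globally antitone function
  set ft : ℝ → ℝ := fun z => f (min 1 (max 0 z)) with hft_def
  have hclamp : ∀ z : ℝ, min 1 (max 0 z) ∈ Set.Icc (0:ℝ) 1 := by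
    intro z
    constructor
    · exact le_min zero_le_one (le_max_left 0 z)
    · exact min_le_left _ _
  have hft_anti : Antitone ft := by
    intro x y hxy
    exact hmono (hclamp x) (hclamp y)
      (min_le_min le_rfl (max_le_max le_rfl hxy))
  have hft_eq : ∀ z ∈ Set.Icc (0:ℝ) 1, ft z = f z := by
    intro z hz
    simp [hft_def, max_eq_right hz.1, min_eq_right hz.2]
  -- the right limit function
  set g : ℝ → ℝ := Function.rightLim ft with hg_def
  have hg_anti : Antitone g := hft_anti.rightLim
  have hg_tendsto : ∀ θ : ℝ, Filter.Tendsto ft (nhdsWithin θ (Set.Ioi θ)) (nhds (g θ)) :=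
    fun θ => hft_anti.tendsto_rightLim θ
  -- primitive
  set A : ℝ → ℝ := fun θ => ∫ z in (0:ℝ)..θ, f z with hA_def
  have hAcont : ContinuousOn A (Set.Icc 0 1) := by
    have := intervalIntegral.continuousOn_primitive_interval
      (a := (0:ℝ)) (b := 1) (μ := volume) (f := f) ?_
    · simpa [Set.uIcc_of_le (zero_le_one' ℝ)] using this
    · rw [Set.uIcc_of_le (zero_le_one' ℝ)]
      exact (intervalIntegrable_iff_integrableOn_Icc_of_le zero_le_one).1 hint
  -- key lower bound on A θ + g θ for θ ∈ [0,1)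
  have hPg : ∀ θ ∈ Set.Ico (0:ℝ) 1, P ≤ A θ + g θ := by
    intro θ hθ
    have hIoc_mem : Set.Ioc θ 1 ∈ nhdsWithin θ (Set.Ioi θ) :=
      Ioc_mem_nhdsGT_of_mem ⟨le_rfl, hθ.2⟩
    have hA_tendsto : Filter.Tendsto A (nhdsWithin θ (Set.Ioi θ)) (nhds (A θ)) := by
      have h1 : nhdsWithin θ (Set.Ioi θ) = nhdsWithin θ (Set.Ioc θ 1) :=
        (nhdsWithin_Ioc_eq_nhdsGT hθ.2).symm
      rw [h1]
      have h2 : ContinuousWithinAt A (Set.Icc 0 1) θ :=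
        hAcont θ ⟨hθ.1, le_of_lt hθ.2⟩
      exact h2.tendsto.mono_left
        (nhdsWithin_mono θ (fun x hx => ⟨le_trans hθ.1 (le_of_lt hx.1), hx.2⟩))
    have hsum : Filter.Tendsto (fun u => A u + ft u) (nhdsWithin θ (Set.Ioi θ))
        (nhds (A θ + g θ)) := hA_tendsto.add (hg_tendsto θ)
    refine ge_of_tendsto hsum ?_
    filter_upwards [hIoc_mem] with u hu
    rw [hft_eq u ⟨le_trans hθ.1 (le_of_lt hu.1), hu.2⟩]
    exact hP u ⟨lt_of_le_of_lt hθ.1 hu.1, hu.2⟩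
  have hPg1 : P ≤ A 1 + g 1 := by
    have hgt : g 1 = f 1 := by
      have : Filter.Tendsto ft (nhdsWithin (1:ℝ) (Set.Ioi 1)) (nhds (f 1)) := by
        have hev : ∀ u ∈ Set.Ioi (1:ℝ), ft u = f 1 := by
          intro u hu
          have : min 1 (max 0 u) = 1 := by
            rw [min_eq_left]
            exact le_max_of_le_right (le_of_lt hu)
          simp [hft_def, this]
        exact Filter.Tendsto.congr' (by filter_upwards [self_mem_nhdsWithin] with u hu
          using (hev u hu).symm) tendsto_const_nhds
      exact tendsto_nhds_unique (hg_tendsto 1) this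
    rw [hgt]
    exact hP 1 ⟨zero_lt_one, le_rfl⟩
  have hPg' : ∀ θ ∈ Set.Icc (0:ℝ) 1, P ≤ A θ + g θ := by
    intro θ hθ
    rcases eq_or_lt_of_le hθ.2 with h | h
    · rw [h]; exact hPg1
    · exact hPg θ ⟨hθ.1, h⟩
  -- the auxiliary function F θ = exp (θ - 1) * A θ
  set F : ℝ → ℝ := fun θ => Real.exp (θ - 1) * A θ with hF_def
  set G : ℝ → ℝ := fun θ => Real.exp (θ - 1) * (A θ + g θ) with hG_def
  have hFcont : ContinuousOn F (Set.Icc 0 1) :=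
    ((Real.continuous_exp.comp (continuous_id.sub continuous_const)).continuousOn).mul hAcont
  -- derivative of F within Ioi θ
  have hFderiv : ∀ θ ∈ Set.Ioo (0:ℝ) 1, HasDerivWithinAt F (G θ) (Set.Ioi θ) θ := by
    intro θ hθ
    have hintθ : IntervalIntegrable f volume 0 θ := by
      apply hint.mono_set
      rw [Set.uIcc_of_le (le_of_lt hθ.1), Set.uIcc_of_le (zero_le_one' ℝ)]
      exact Set.Icc_subset_Icc le_rfl (le_of_lt hθ.2)
    have hmeas : StronglyMeasurableAtFilter f (nhdsWithin θ (Set.Ioi θ)) volume := by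
      refine ⟨Set.Ioc θ 1, Ioc_mem_nhdsGT_of_mem ⟨le_rfl, hθ.2⟩, ?_⟩
      exact (hint.1.mono_set (Set.Ioc_subset_Ioc (le_of_lt hθ.1) le_rfl)).aestronglyMeasurable
    have hf_tendsto : Filter.Tendsto f (nhdsWithin θ (Set.Ioi θ)) (nhds (g θ)) := by
      refine (hg_tendsto θ).congr' ?_
      filter_upwards [Ioc_mem_nhdsGT_of_mem (Set.mem_Ico.2 ⟨le_rfl, hθ.2⟩)] with u hu
      exact hft_eq u ⟨le_trans (le_of_lt hθ.1) (le_of_lt hu.1), hu.2⟩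
    have hAderiv : HasDerivWithinAt A (g θ) (Set.Ici θ) θ :=
      intervalIntegral.integral_hasDerivWithinAt_of_tendsto_ae_right hintθ
        (s := Set.Ici θ) (t := Set.Ioi θ) hmeas (hf_tendsto.mono_left inf_le_left)
    have hAderiv' : HasDerivWithinAt A (g θ) (Set.Ioi θ) θ :=
      hAderiv.mono Set.Ioi_subset_Ici_self
    have hexp : HasDerivWithinAt (fun u : ℝ => Real.exp (u - 1)) (Real.exp (θ - 1))
        (Set.Ioi θ) θ := by
      have h1 : HasDerivAt (fun u : ℝ => Real.exp (u - 1)) (Real.exp (θ - 1) * 1) θ :=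
        ((hasDerivAt_id' θ).sub_const 1).exp
      simpa using h1.hasDerivWithinAt
    have := hexp.fun_mul hAderiv'
    refine this.congr_deriv ?_
    show _ = Real.exp (θ - 1) * (A θ + g θ)
    ring
  -- integrability of G
  have hGint : IntervalIntegrable G volume 0 1 := by
    have hAint : IntervalIntegrable A volume 0 1 := by
      apply ContinuousOn.intervalIntegrable
      rwa [Set.uIcc_of_le (zero_le_one' ℝ)]
    have hgint : IntervalIntegrable g volume 0 1 := hg_anti.intervalIntegrable
    have hsum : IntervalIntegrable (fun θ => A θ + g θ) volume 0 1 := hAint.add hgint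
    have := hsum.continuousOn_mul (g := fun u => Real.exp (u - 1))
      ((Real.continuous_exp.comp (continuous_id.sub continuous_const)).continuousOn)
    simpa [hG_def] using this
  -- FTC
  have hFTC : ∫ θ in (0:ℝ)..1, G θ = F 1 - F 0 :=
    intervalIntegral.integral_eq_sub_of_hasDeriv_right_of_le zero_le_one hFcont hFderiv hGint
  have hF1 : F 1 = A 1 := by simp [hF_def]
  have hF0 : F 0 = 0 := by simp [hF_def, hA_def]
  -- comparison
  have hcomp : ∫ θ in (0:ℝ)..1, Real.exp (θ - 1) * P ≤ ∫ θ in (0:ℝ)..1, G θ := by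
    apply intervalIntegral.integral_mono_on zero_le_one ?_ hGint
    · intro θ hθ
      exact mul_le_mul_of_nonneg_left (hPg' θ hθ) (le_of_lt (Real.exp_pos _))
    · apply ContinuousOn.intervalIntegrable
      exact ((Real.continuous_exp.comp (continuous_id.sub continuous_const)).mul
        continuous_const).continuousOn
  -- compute the left integral
  have hleft : ∫ θ in (0:ℝ)..1, Real.exp (θ - 1) * P = (1 - 1 / Real.exp 1) * P := by
    rw [intervalIntegral.integral_mul_const]
    congr 1
    rw [intervalIntegral.integral_comp_sub_right (fun u => Real.exp u) 1]
    rw [integral_exp]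
    norm_num [Real.exp_neg]
  calc (1 - 1 / Real.exp 1) * P = ∫ θ in (0:ℝ)..1, Real.exp (θ - 1) * P := hleft.symm
    _ ≤ ∫ θ in (0:ℝ)..1, G θ := hcomp
    _ = A 1 := by rw [hFTC, hF1, hF0, sub_zero]
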